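/- Let f_A = x_A·((x_A−1)² + (x_B−2)²) and f_B = x_B·((x_A−1)² + (x_B−2)²) in ℝ[x_A, x_B], and let I = ⟨f_A, f_B⟩. Then: (i) the set of points (a,b) ∈ ℝ² with a > 0, b > 0 and f_A(a,b) = f_B(a,b) = 0 is exactly {(1,2)}, so the system has ACR in both species with ACR-values 1 and 2, respectively; and (ii) x_A − 1 ∉ I, and x_A − 1 is not a zero-divisor of I, i.e., for every g ∈ ℝ[x_A, x_B], if (x_A − 1)·g ∈ I then g ∈ I. -/

import Mathlib

open MvPolynomial

private lemma qpoly_prime :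
    Prime ((X 0 - C 1) ^ 2 + (X 1 - C 2) ^ 2 : MvPolynomial (Fin 2) ℝ) := by
  set A := MvPolynomial (Fin 1) ℝ
  set e := finSuccEquiv ℝ 1 with he
  set c : A := (X 0 - C 2) ^ 2 with hc
  set Q : Polynomial A := Polynomial.C 1 * Polynomial.X ^ 2
      + Polynomial.C (-(C 2)) * Polynomial.X + Polynomial.C (C 1 + c) with hQ
  have hX1 : e (X 1) = Polynomial.C (X 0) := by
    have h : (1 : Fin 2) = (0 : Fin 1).succ := rfl
    rw [h, finSuccEquiv_X_succ]
  have hCr : ∀ r : ℝ, e (C r) = Polynomial.C (C r) := by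
    intro r
    rw [← MvPolynomial.algebraMap_eq, AlgEquiv.commutes]
    simp [Polynomial.algebraMap_apply, MvPolynomial.algebraMap_eq]
  have hq : e ((X 0 - C 1) ^ 2 + (X 1 - C 2) ^ 2) = Q := by
    rw [map_add, map_pow, map_pow, map_sub, map_sub, finSuccEquiv_X_zero, hX1,
      hCr, hCr, hQ, hc]
    simp only [map_add, map_sub, map_pow, map_mul, map_neg, map_one, map_ofNat]
    ring
  have hdeg : Q.natDegree = 2 := by
    rw [hQ]
    exact Polynomial.natDegree_quadratic one_ne_zero
  have hmonic : Q.Monic := by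
    rw [Polynomial.Monic, Polynomial.leadingCoeff, hdeg, hQ]
    simp [Polynomial.coeff_add, Polynomial.coeff_C_mul, Polynomial.coeff_X_pow,
      Polynomial.coeff_C, Polynomial.coeff_one]
  have hirr : Irreducible Q := by
    by_contra hni
    obtain ⟨c₁, c₂, h0, h1⟩ :=
      (hmonic.not_irreducible_iff_exists_add_mul_eq_coeff hdeg).mp hni
    rw [hQ] at h0 h1
    simp [Polynomial.coeff_add, Polynomial.coeff_C_mul, Polynomial.coeff_X_pow,
      Polynomial.coeff_C, Polynomial.coeff_X, Polynomial.coeff_one, map_ofNat] at h0 h1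
    have hkey : (c₁ + 1) ^ 2 + c = 0 := by
      have h1' : c₁ + c₂ = -(2:A) := by linear_combination -h1
      have h0' : (1:A) + c = c₁ * c₂ := by linear_combination h0
      linear_combination h0' + c₁ * h1'
    have := congrArg (eval ![(0:ℝ)]) hkey
    simp [hc] at this
    nlinarith [sq_nonneg (eval ![(0:ℝ)] c₁ + 1), this]
  have hprimeQ : Prime Q := UniqueFactorizationMonoid.irreducible_iff_prime.mp hirr
  have := (MulEquiv.prime_iff e.toRingEquiv.toMulEquiv
    (p := ((X 0 - C 1) ^ 2 + (X 1 - C 2) ^ 2 : MvPolynomial (Fin 2) ℝ))).mp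
  apply this
  show Prime (e _)
  rw [hq]; exact hprimeQ

private lemma mem_span_X01 (h : MvPolynomial (Fin 2) ℝ) (hh : constantCoeff h = 0) :
    h ∈ Ideal.span ({X 0, X 1} : Set (MvPolynomial (Fin 2) ℝ)) := by
  have key : ∀ p : MvPolynomial (Fin 2) ℝ,
      p - C (constantCoeff p) ∈ Ideal.span ({X 0, X 1} : Set (MvPolynomial (Fin 2) ℝ)) := by
    intro p
    induction p using MvPolynomial.induction_on with
    | C a => simp
    | add p q hp hq =>
        have : p + q - C (constantCoeff (p + q)) =
            (p - C (constantCoeff p)) + (q - C (constantCoeff q)) := by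
          rw [map_add, map_add]; ring
        rw [this]
        exact Ideal.add_mem _ hp hq
    | mul_X p i hp =>
        have hXi : (X i : MvPolynomial (Fin 2) ℝ) ∈
            Ideal.span ({X 0, X 1} : Set (MvPolynomial (Fin 2) ℝ)) := by
          fin_cases i
          · exact Ideal.subset_span (by simp)
          · exact Ideal.subset_span (by simp)
        have : p * X i - C (constantCoeff (p * X i)) = p * X i := by
          simp [map_mul]
        rw [this]
        exact Ideal.mul_mem_left _ p hXi
  have := key h
  rwa [hh, map_zero, sub_zero] at this

theorem stmt_16
    (fA fB : MvPolynomial (Fin 2) ℝ)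
    (hfA : fA = X 0 * ((X 0 - C 1) ^ 2 + (X 1 - C 2) ^ 2))
    (hfB : fB = X 1 * ((X 0 - C 1) ^ 2 + (X 1 - C 2) ^ 2))
    (I : Ideal (MvPolynomial (Fin 2) ℝ))
    (hI : I = Ideal.span {fA, fB}) :
    (∀ a b : ℝ,
      (0 < a ∧ 0 < b ∧ eval ![a, b] fA = 0 ∧ eval ![a, b] fB = 0) ↔ (a = 1 ∧ b = 2)) ∧
    (X 0 - C 1) ∉ I ∧
    (∀ g : MvPolynomial (Fin 2) ℝ, (X 0 - C 1) * g ∈ I → g ∈ I) := by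
  subst hfA hfB hI
  refine ⟨?_, ?_, ?_⟩
  · intro a b
    constructor
    · rintro ⟨ha, hb, h1, h2⟩
      simp at h1 h2
      have hs : (a - 1) ^ 2 + (b - 2) ^ 2 = 0 := h1.resolve_left (ne_of_gt ha)
      constructor <;> nlinarith [sq_nonneg (a - 1), sq_nonneg (b - 2)]
    · rintro ⟨rfl, rfl⟩
      norm_num
  · intro hmem
    have hker : Ideal.span {X 0 * ((X 0 - C 1) ^ 2 + (X 1 - C 2) ^ 2),
        X 1 * ((X 0 - C 1) ^ 2 + (X 1 - C 2) ^ 2)} ≤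
        RingHom.ker (eval (![0, 0] : Fin 2 → ℝ)) := by
      rw [Ideal.span_le]
      rintro p (rfl | rfl) <;> simp [RingHom.mem_ker]
    have := hker hmem
    simp [RingHom.mem_ker] at this
  · intro g hg
    set q : MvPolynomial (Fin 2) ℝ := (X 0 - C 1) ^ 2 + (X 1 - C 2) ^ 2 with hqdef
    obtain ⟨a, b, hab⟩ := Ideal.mem_span_pair.mp hg
    have hdvd : q ∣ (X 0 - C 1) * g := ⟨a * X 0 + b * X 1, by linear_combination -hab⟩
    have hnotdvd : ¬ q ∣ (X 0 - C 1) := by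
      rintro ⟨cq, hcq⟩
      have := congrArg (aeval (![1 + Complex.I, 3] : Fin 2 → ℂ)) hcq
      simp [hqdef] at this
      norm_num at this
    obtain ⟨h, hgh⟩ := (qpoly_prime.2.2 _ _ hdvd).resolve_left hnotdvd
    have key : (X 0 - C 1) * h = a * X 0 + b * X 1 := by
      have hq0 : q ≠ 0 := qpoly_prime.1
      have hz : q * ((X 0 - C 1) * h - (a * X 0 + b * X 1)) = 0 := by
        rw [hgh] at hab
        linear_combination -hab
      rcases mul_eq_zero.mp hz with h' | h'
      · exact absurd h' hq0
      · linear_combination h'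
    have hcc : constantCoeff h = 0 := by
      have := congrArg constantCoeff key
      simp at this
      linarith [this]
    obtain ⟨u, v, huv⟩ := Ideal.mem_span_pair.mp (mem_span_X01 h hcc)
    exact Ideal.mem_span_pair.mpr ⟨u, v, by rw [hgh, ← huv]; ring⟩
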